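/- Let X be a Hilbert space, φ ∈ C²(X, ℝ), c ∈ ℝ, ε > 0. Assume that for all u ∈ φ⁻¹([c−2ε, c+2ε]) one has ‖φ′(u)‖ ≥ 2ε. Then there exists a continuous map η : X → X such that (a) η(u) = u for all u ∉ φ⁻¹([c−2ε, c+2ε]), and (b) η maps φ⁻¹((−∞, c+ε]) into φ⁻¹((−∞, c−ε]). -/

import Mathlib

open Set Metric Real Filter Topology RealInnerProductSpace

theorem tube_lipschitz {E : Type*} [NormedAddCommGroup E] [NormedSpace ℝ E]
    {V : E → E} {C : ℝ} (hV : LocallyLipschitz V) (hC : 0 < C) (hb : ∀ x, ‖V x‖ ≤ C)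
    {K : Set E} (hK : IsCompact K) (hne : K.Nonempty) :
    ∃ r > (0:ℝ), ∃ L : NNReal, LipschitzOnWith L V (Metric.thickening r K) := by
  -- local data at every point
  have hloc : ∀ x : E, ∃ p : ℝ × NNReal, 0 < p.1 ∧ LipschitzOnWith p.2 V (ball x p.1) := by
    intro x
    obtain ⟨L, s, hs, hl⟩ := hV x
    obtain ⟨ρ, hρ, hsub⟩ := Metric.mem_nhds_iff.mp hs
    exact ⟨(ρ, L), hρ, hl.mono hsub⟩
  choose p hp hlip using hloc
  set ρ : E → ℝ := fun x => (p x).1 with hρdef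
  obtain ⟨t, htK, hcov⟩ := hK.elim_nhds_subcover (fun x => ball x (ρ x / 2))
    (fun x _ => ball_mem_nhds x (half_pos (hp x)))
  obtain ⟨k₀, hk₀⟩ := hne
  obtain ⟨x₀, hx₀t, _⟩ := mem_iUnion₂.mp (hcov hk₀)
  have htne : t.Nonempty := ⟨x₀, hx₀t⟩
  set r : ℝ := (t.inf' htne ρ) / 4 with hrdef
  have hr : 0 < r := by
    apply div_pos _ (by norm_num)
    exact (Finset.lt_inf'_iff htne).mpr (fun x _ => hp x)
  set L : NNReal := (t.sup fun x => (p x).2) ⊔ (2 * C / r).toNNReal with hLdef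
  refine ⟨r, hr, L, LipschitzOnWith.of_dist_le_mul ?_⟩
  intro x hx y hy
  rcases le_or_gt r (dist x y) with hfar | hnear
  · -- far apart: use the bound
    have h1 : dist (V x) (V y) ≤ 2 * C := by
      rw [dist_eq_norm]
      calc ‖V x - V y‖ ≤ ‖V x‖ + ‖V y‖ := norm_sub_le _ _
        _ ≤ 2 * C := by have := hb x; have := hb y; linarith
    have h2 : (2 * C / r) * r ≤ (2 * C / r) * dist x y := by
      apply mul_le_mul_of_nonneg_left hfar (by positivity)
    have h3 : ((2 * C / r).toNNReal : ℝ) = 2 * C / r := Real.coe_toNNReal _ (by positivity)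
    have hL : (2 * C / r : ℝ) ≤ (L : ℝ) := by
      rw [hLdef]; push_cast [NNReal.coe_max]; rw [h3.symm] at *
      exact le_max_of_le_right (by rw [h3])
    calc dist (V x) (V y) ≤ 2 * C := h1
      _ = (2 * C / r) * r := by field_simp
      _ ≤ (2 * C / r) * dist x y := h2
      _ ≤ (L : ℝ) * dist x y := by
          apply mul_le_mul_of_nonneg_right hL dist_nonneg
  · -- nearby: both in one local ball
    obtain ⟨k, hkK, hdk⟩ := Metric.mem_thickening_iff.mp hx
    obtain ⟨i, hit, hki⟩ := mem_iUnion₂.mp (hcov hkK)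
    have hri : ρ i ≥ 4 * r := by
      rw [hrdef]
      have := Finset.inf'_le ρ hit
      linarith
    have hki' : dist k i < ρ i / 2 := mem_ball.mp hki
    have hxi : x ∈ ball i (ρ i) := by
      rw [mem_ball]
      calc dist x i ≤ dist x k + dist k i := dist_triangle _ _ _
        _ < r + ρ i / 2 := by linarith
        _ ≤ ρ i := by linarith
    have hyi : y ∈ ball i (ρ i) := by
      rw [mem_ball]
      calc dist y i ≤ dist y x + dist x k + dist k i := dist_triangle4 _ _ _ _
        _ < r + r + ρ i / 2 := by rw [dist_comm y x]; linarith
        _ ≤ ρ i := by linarith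
    have := (hlip i).dist_le_mul x hxi y hyi
    have hLi : ((p i).2 : ℝ) ≤ (L : ℝ) := by
      rw [hLdef]; push_cast [NNReal.coe_max]
      exact le_max_of_le_left (by exact_mod_cast Finset.le_sup (f := fun x => (p x).2) hit)
    calc dist (V x) (V y) ≤ ((p i).2 : ℝ) * dist x y := this
      _ ≤ (L : ℝ) * dist x y := mul_le_mul_of_nonneg_right hLi dist_nonneg

theorem hasDerivWithinAt_Ici_of_Icc {E : Type*} [NormedAddCommGroup E] [NormedSpace ℝ E]
    {x : ℝ → E} {v : E} {a b t : ℝ} (ht : t ∈ Ico a b)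
    (h : HasDerivWithinAt x v (Icc a b) t) : HasDerivWithinAt x v (Ici t) t := by
  apply h.mono_of_mem_nhdsWithin
  have : Ici t ∩ Iio b ∈ nhdsWithin t (Ici t) := inter_mem_nhdsWithin _ (Iio_mem_nhds ht.2)
  exact Filter.mem_of_superset this (fun s hs => ⟨le_trans ht.1 hs.1, le_of_lt hs.2⟩)

/-- Uniqueness of solutions for a locally Lipschitz bounded vector field. -/
theorem ode_unique {E : Type*} [NormedAddCommGroup E] [NormedSpace ℝ E]
    {V : E → E} {C : ℝ} (hV : LocallyLipschitz V) (hC : 0 < C) (hb : ∀ x, ‖V x‖ ≤ C)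
    {T : ℝ} {x y : ℝ → E}
    (hx : ∀ t ∈ Icc (0:ℝ) T, HasDerivWithinAt x (V (x t)) (Icc 0 T) t)
    (hy : ∀ t ∈ Icc (0:ℝ) T, HasDerivWithinAt y (V (y t)) (Icc 0 T) t)
    (h0 : x 0 = y 0) : EqOn x y (Icc 0 T) := by
  rcases le_or_gt 0 T with hT | hT
  · have hxc : ContinuousOn x (Icc 0 T) := fun t ht => (hx t ht).continuousWithinAt
    have hyc : ContinuousOn y (Icc 0 T) := fun t ht => (hy t ht).continuousWithinAt
    set K : Set E := x '' Icc 0 T ∪ y '' Icc 0 T with hKdef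
    have hKc : IsCompact K := ((isCompact_Icc).image_of_continuousOn hxc).union
      ((isCompact_Icc).image_of_continuousOn hyc)
    have hKne : K.Nonempty := ⟨x 0, Or.inl ⟨0, ⟨le_refl _, hT⟩, rfl⟩⟩
    obtain ⟨r, hr, L, hlip⟩ := tube_lipschitz hV hC hb hKc hKne
    apply ODE_solution_unique_of_mem_Icc_right
      (v := fun _ => V) (s := fun _ => Metric.thickening r K)
      (fun _ _ => hlip) hxc
      (fun t ht => hasDerivWithinAt_Ici_of_Icc ht (hx t (Ico_subset_Icc_self ht)))
      (fun t ht => Metric.self_subset_thickening hr K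
        (Or.inl ⟨t, Ico_subset_Icc_self ht, rfl⟩))
      hyc
      (fun t ht => hasDerivWithinAt_Ici_of_Icc ht (hy t (Ico_subset_Icc_self ht)))
      (fun t ht => Metric.self_subset_thickening hr K
        (Or.inr ⟨t, Ico_subset_Icc_self ht, rfl⟩))
      h0
  · intro t ht; rw [Icc_eq_empty (by linarith)] at ht; exact absurd ht (notMem_empty t)

section
variable {E : Type*} [NormedAddCommGroup E] [NormedSpace ℝ E] [CompleteSpace E]
    {V : E → E} {C : ℝ}

/-- local existence to the right, with quantitative interval. -/
theorem local_ext (hV : LocallyLipschitz V) (hC : 0 < C) (hb : ∀ x, ‖V x‖ ≤ C)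
    (z : E) (t₀ : ℝ) :
    ∃ δ > (0:ℝ), ∃ w : ℝ → E, w t₀ = z ∧
      ∀ t ∈ Icc t₀ (t₀ + δ), HasDerivWithinAt w (V (w t)) (Icc t₀ (t₀ + δ)) t := by
  obtain ⟨L, s, hs, hl⟩ := hV z
  obtain ⟨R, hR, hsub⟩ := Metric.mem_nhds_iff.mp hs
  set δ : ℝ := R / 2 / C with hδdef
  have hδ : 0 < δ := by positivity
  have hpl : IsPicardLindelof (fun _ : ℝ => V) (tmin := t₀) (tmax := t₀ + δ)
      ⟨t₀, le_refl _, by linarith⟩ z (Real.toNNReal (R / 2)) 0 (Real.toNNReal C) L :=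
    IsPicardLindelof.of_time_independent
      (fun x _ => by rw [Real.coe_toNNReal _ hC.le]; exact hb x)
      (hl.mono ((closedBall_subset_ball
        (by rw [Real.coe_toNNReal _ (by positivity)]; linarith)).trans hsub))
      (by
        simp only [NNReal.coe_zero, sub_zero, Real.coe_toNNReal _ hC.le,
          Real.coe_toNNReal _ (by positivity : (0:ℝ) ≤ R / 2), add_sub_cancel_left, sub_self,
          max_eq_left hδ.le, hδdef]
        rw [max_eq_left (by positivity : (0:ℝ) ≤ R / 2 / C), mul_div_cancel₀ _ (ne_of_gt hC)])
  obtain ⟨w, hw0, hwd⟩ := IsPicardLindelof.exists_eq_forall_mem_Icc_hasDerivWithinAt₀ hpl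
  exact ⟨δ, hδ, w, hw0, hwd⟩

theorem ode_exists (hV : LocallyLipschitz V) (hC : 0 < C) (hb : ∀ x, ‖V x‖ ≤ C)
    (u₀ : E) (T : ℝ) (hT : 0 ≤ T) :
    ∃ x : ℝ → E, x 0 = u₀ ∧ ∀ t ∈ Icc (0:ℝ) T, HasDerivWithinAt x (V (x t)) (Icc 0 T) t := by
  classical
  set Sol : ℝ → (ℝ → E) → Prop :=
    fun a x => x 0 = u₀ ∧ ∀ t ∈ Icc (0:ℝ) a, HasDerivWithinAt x (V (x t)) (Icc 0 a) t with hSol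
  set A : Set ℝ := {a | 0 ≤ a ∧ a ≤ T ∧ ∃ x, Sol a x} with hA
  -- A is downward closed
  have hdown : ∀ a ∈ A, ∀ a', 0 ≤ a' → a' ≤ a → a' ∈ A := by
    rintro a ⟨_, haT, x, hx0, hx⟩ a' h0' h'a
    exact ⟨h0', le_trans h'a haT, x, hx0,
      fun t ht => (hx t (Icc_subset_Icc_right h'a ht)).mono (Icc_subset_Icc_right h'a)⟩
  -- A is nonempty
  have hAne : A.Nonempty := by
    obtain ⟨δ, hδ, w, hw0, hwd⟩ := local_ext hV hC hb u₀ 0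
    refine ⟨min δ T, le_min hδ.le hT, min_le_right _ _, w, hw0, fun t ht => ?_⟩
    have hsub : Icc (0:ℝ) (min δ T) ⊆ Icc 0 (0 + δ) := by
      apply Icc_subset_Icc_right; simp [min_le_left]
    exact (hwd t (hsub ht)).mono hsub
  have h0A : (0:ℝ) ∈ A := by
    obtain ⟨a, ha⟩ := hAne
    exact hdown a ha 0 le_rfl ha.1
  have hbdd : BddAbove A := ⟨T, fun a ha => ha.2.1⟩
  set τ : ℝ := sSup A with hτdef
  have hτ0 : 0 ≤ τ := le_csSup hbdd h0A
  have hτT : τ ≤ T := csSup_le hAne fun a ha => ha.2.1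
  have hmem : ∀ a, 0 ≤ a → a < τ → a ∈ A := by
    intro a h0 hlt
    obtain ⟨b, hbA, hab⟩ := exists_lt_of_lt_csSup hAne hlt
    exact hdown b hbA a h0 hab.le
  -- Step 1 : τ ∈ A
  have hτA : τ ∈ A := by
    rcases eq_or_lt_of_le hτ0 with h0 | h0
    · rwa [← h0]
    · -- 0 < τ : limit of solutions argument
      set tn : ℕ → ℝ := fun n => τ - τ / (n + 2) with htn
      have htn_nonneg : ∀ n : ℕ, 0 ≤ tn n := by
        intro n
        have h1 : τ / ((n:ℝ) + 2) ≤ τ := div_le_self hτ0 (by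
          have : (0:ℝ) ≤ (n:ℕ) := Nat.cast_nonneg n
          push_cast
          linarith)
        simp only [htn]; linarith
      have htn_lt : ∀ n : ℕ, tn n < τ := by
        intro n
        have h1 : 0 < τ / ((n:ℝ) + 2) := by positivity
        simp only [htn]; linarith
      have htn_mono : Monotone tn := by
        intro n m hnm
        have h2 : ((n:ℝ) + 2) ≤ ((m:ℝ) + 2) := by
          have : (n:ℝ) ≤ (m:ℝ) := Nat.cast_le.2 hnm
          linarith
        simp only [htn, sub_le_sub_iff_left]
        gcongr
      have htend : Tendsto tn atTop (𝓝 τ) := by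
        have h1 : Tendsto (fun n : ℕ => ((n:ℝ) + 2)) atTop atTop :=
          tendsto_atTop_add_const_right _ 2 tendsto_natCast_atTop_atTop
        have h2 : Tendsto (fun n : ℕ => τ / ((n:ℝ) + 2)) atTop (𝓝 0) :=
          Tendsto.div_atTop tendsto_const_nhds h1
        have h3 := tendsto_const_nhds.sub h2 (f := fun _ : ℕ => τ)
        simpa using h3
      have htnA : ∀ n, tn n ∈ A := fun n => hmem _ (htn_nonneg n) (htn_lt n)
      set xs : ℕ → ℝ → E := fun n => (htnA n).2.2.choose with hxsdef
      have hxs : ∀ n, Sol (tn n) (xs n) := fun n => (htnA n).2.2.choose_spec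
      have hcoh : ∀ m n, m ≤ n → EqOn (xs m) (xs n) (Icc 0 (tn m)) := by
        intro m n hmn
        have hsub : Icc (0:ℝ) (tn m) ⊆ Icc 0 (tn n) := Icc_subset_Icc_right (htn_mono hmn)
        exact ode_unique hV hC hb (hxs m).2
          (fun t ht => ((hxs n).2 t (hsub ht)).mono hsub)
          ((hxs m).1.trans (hxs n).1.symm)
      have hlipn : ∀ n, ∀ s ∈ Icc 0 (tn n), ∀ t ∈ Icc 0 (tn n), s ≤ t →
          ‖xs n t - xs n s‖ ≤ C * (t - s) := by
        intro n s hs t ht hst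
        have hsub : Icc s (tn n) ⊆ Icc 0 (tn n) := Icc_subset_Icc_left hs.1
        have := norm_image_sub_le_of_norm_deriv_le_segment'
          (f := xs n) (f' := fun r => V (xs n r)) (a := s) (b := tn n) (C := C)
          (fun r hr => ((hxs n).2 r (hsub hr)).mono hsub)
          (fun r _ => hb _) t ⟨hst, ht.2⟩
        exact this
      set aseq : ℕ → E := fun n => xs n (tn n) with haseq
      have hcauchy : CauchySeq aseq := by
        rw [Metric.cauchySeq_iff']
        intro ε hε
        have hsub1 : Tendsto (fun n : ℕ => τ - tn n) atTop (𝓝 0) := by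
          have := Tendsto.sub (tendsto_const_nhds : Tendsto (fun _ : ℕ => τ) atTop (𝓝 τ)) htend
          simpa using this
        have h1 : Tendsto (fun n : ℕ => C * (τ - tn n)) atTop (𝓝 0) := by
          have := hsub1.const_mul C
          simpa using this
        obtain ⟨N, hN⟩ := (h1.eventually (gt_mem_nhds hε)).exists_forall_of_atTop
        refine ⟨N, fun n hn => ?_⟩
        have he : xs N (tn N) = xs n (tn N) :=
          hcoh N n hn ⟨htn_nonneg N, le_rfl⟩
        rw [dist_eq_norm]
        have h2 : ‖xs n (tn n) - xs n (tn N)‖ ≤ C * (tn n - tn N) :=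
          hlipn n (tn N) ⟨htn_nonneg N, htn_mono hn⟩ (tn n) ⟨htn_nonneg n, le_rfl⟩
            (htn_mono hn)
        have h3 : C * (tn n - tn N) ≤ C * (τ - tn N) := by
          apply mul_le_mul_of_nonneg_left _ hC.le
          linarith [htn_lt n]
        calc ‖aseq n - aseq N‖ = ‖xs n (tn n) - xs n (tn N)‖ := by rw [haseq]; simp [he]
          _ ≤ C * (tn n - tn N) := h2
          _ ≤ C * (τ - tn N) := h3
          _ < ε := hN N le_rfl
      obtain ⟨l, hl⟩ := cauchySeq_tendsto_of_complete hcauchy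
      have hex : ∀ t, t < τ → ∃ n, t < tn n := fun t ht =>
        (htend.eventually (lt_mem_nhds ht)).exists
      set Nf : ℝ → ℕ := fun t => if h : t < τ then (hex t h).choose else 0 with hNf
      have hNspec : ∀ t (h : t < τ), t < tn (Nf t) := by
        intro t h
        simp only [hNf, dif_pos h]
        exact (hex t h).choose_spec
      set z : ℝ → E := fun t => if h : t < τ then xs (Nf t) t else l with hz
      have zeq : ∀ m, EqOn z (xs m) (Icc 0 (tn m)) := by
        intro m t ht
        have htτ : t < τ := lt_of_le_of_lt ht.2 (htn_lt m)
        have h1 : xs (Nf t) t = xs (max m (Nf t)) t :=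
          hcoh (Nf t) _ (le_max_right _ _) ⟨ht.1, (hNspec t htτ).le⟩
        have h2 : xs m t = xs (max m (Nf t)) t := hcoh m _ (le_max_left _ _) ht
        simp only [hz, dif_pos htτ]
        rw [h1, ← h2]
      have hzτ : z τ = l := by simp [hz]
      have zlim : ∀ t ∈ Ico (0:ℝ) τ, ‖z t - l‖ ≤ C * (τ - t) := by
        intro t ht
        have hev : ∀ᶠ n in atTop, ‖z t - aseq n‖ ≤ C * (tn n - t) := by
          filter_upwards [htend.eventually (lt_mem_nhds ht.2)] with n hn
          have hzt : z t = xs n t := zeq n ⟨ht.1, hn.le⟩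
          rw [hzt, haseq, norm_sub_rev]
          exact hlipn n t ⟨ht.1, hn.le⟩ (tn n) ⟨htn_nonneg n, le_rfl⟩ hn.le
        have h1 : Tendsto (fun n => ‖z t - aseq n‖) atTop (𝓝 ‖z t - l‖) :=
          (tendsto_const_nhds.sub hl).norm
        have h2 : Tendsto (fun n => C * (tn n - t)) atTop (𝓝 (C * (τ - t))) := by
          have := Tendsto.sub htend (tendsto_const_nhds : Tendsto (fun _ : ℕ => t) atTop (𝓝 t))
          exact this.const_mul C
        exact le_of_tendsto_of_tendsto h1 h2 hev
      have zcont : ContinuousOn z (Icc 0 τ) := by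
        intro s hs
        rcases lt_or_eq_of_le hs.2 with hsτ | hsτ
        · obtain ⟨n, hn⟩ := hex s hsτ
          have hmem1 : Icc 0 τ ∩ Iio (tn n) ∈ nhdsWithin s (Icc 0 τ) :=
            inter_mem_nhdsWithin _ (Iio_mem_nhds hn)
          have hmem2 : Icc (0:ℝ) (tn n) ∈ nhdsWithin s (Icc 0 τ) :=
            Filter.mem_of_superset hmem1 (fun y hy => ⟨hy.1.1, hy.2.le⟩)
          have hxc : ContinuousWithinAt (xs n) (Icc 0 τ) s :=
            (((hxs n).2 s ⟨hs.1, hn.le⟩).continuousWithinAt).mono_of_mem_nhdsWithin hmem2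
          exact hxc.congr_of_eventuallyEq
            (Filter.eventuallyEq_of_mem hmem1 (fun y hy => zeq n ⟨hy.1.1, hy.2.le⟩))
            (zeq n ⟨hs.1, hn.le⟩)
        · have hbound : ∀ t ∈ Icc 0 τ, dist (z t) l ≤ C * (τ - t) := by
            intro t ht
            rcases lt_or_eq_of_le ht.2 with h | h
            · rw [dist_eq_norm]; exact zlim t ⟨ht.1, h⟩
            · rw [h, hzτ, dist_self]; simp [h]
          have htt : Tendsto (fun t => C * (τ - t)) (nhdsWithin τ (Icc 0 τ)) (𝓝 0) := by
            have h1 : Tendsto (fun t : ℝ => C * (τ - t)) (𝓝 τ) (𝓝 (C * (τ - τ))) :=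
              ((tendsto_const_nhds.sub tendsto_id)).const_mul C
            simpa using h1.mono_left nhdsWithin_le_nhds
          have hzl : Tendsto z (nhdsWithin τ (Icc 0 τ)) (𝓝 l) := by
            rw [tendsto_iff_dist_tendsto_zero]
            refine squeeze_zero' ?_ ?_ htt
            · exact eventually_nhdsWithin_of_forall (fun t _ => dist_nonneg)
            · exact eventually_nhdsWithin_of_forall hbound
          have : ContinuousWithinAt z (Icc 0 τ) τ := by
            show Tendsto z (nhdsWithin τ (Icc 0 τ)) (𝓝 (z τ))
            rw [hzτ]; exact hzl
          rwa [hsτ]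
      have hVcont : Continuous V := hV.continuous
      have hVz : ContinuousOn (fun s => V (z s)) (Icc 0 τ) :=
        hVcont.comp_continuousOn zcont
      set w : ℝ → E := fun t => u₀ + ∫ s in (0:ℝ)..t, V (z s) with hw
      have hint : ∀ t₁ ∈ Icc (0:ℝ) τ, ∀ t₂ ∈ Icc (0:ℝ) τ,
          IntervalIntegrable (fun s => V (z s)) MeasureTheory.volume t₁ t₂ := by
        intro t₁ h₁ t₂ h₂
        apply ContinuousOn.intervalIntegrable
        apply hVz.mono
        rw [uIcc]
        exact Icc_subset_Icc (le_inf h₁.1 h₂.1) (sup_le h₁.2 h₂.2)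
      have hwd : ∀ t ∈ Icc (0:ℝ) τ, HasDerivWithinAt w (V (z t)) (Icc 0 τ) t := by
        intro t ht
        haveI : Fact (t ∈ Icc (0:ℝ) τ) := ⟨ht⟩
        apply HasDerivWithinAt.const_add
        exact intervalIntegral.integral_hasDerivWithinAt_right
          (hint 0 ⟨le_rfl, hτ0⟩ t ht)
          (hVz.stronglyMeasurableAtFilter_nhdsWithin measurableSet_Icc t)
          (hVz t ht)
      have hzw' : ∀ t ∈ Ico (0:ℝ) τ, z t = w t := by
        intro t ht
        obtain ⟨m, hm⟩ := hex t ht.2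
        have htm : t ∈ Icc (0:ℝ) (tn m) := ⟨ht.1, hm.le⟩
        have hcxsm : ContinuousOn (xs m) (Icc 0 (tn m)) :=
          fun r hr => ((hxs m).2 r hr).continuousWithinAt
        have hcix : ContinuousOn (xs m) (Icc 0 t) := hcxsm.mono (Icc_subset_Icc_right hm.le)
        have hderiv : ∀ r ∈ Ioo (0:ℝ) t, HasDerivWithinAt (xs m) (V (xs m r)) (Ioi r) r := by
          intro r hr
          have hrmem : r ∈ Ico (0:ℝ) (tn m) := ⟨hr.1.le, lt_trans hr.2 hm⟩
          exact (hasDerivWithinAt_Ici_of_Icc hrmem ((hxs m).2 r (Ico_subset_Icc_self hrmem))).mono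
            Ioi_subset_Ici_self
        have hintm : IntervalIntegrable (fun s => V (xs m s)) MeasureTheory.volume 0 t := by
          apply ContinuousOn.intervalIntegrable
          apply (hVcont.comp_continuousOn hcxsm).mono
          rw [uIcc_of_le ht.1]
          exact Icc_subset_Icc_right hm.le
        have hFTC : ∫ s in (0:ℝ)..t, V (xs m s) = xs m t - xs m 0 :=
          intervalIntegral.integral_eq_sub_of_hasDeriv_right_of_le ht.1 hcix hderiv hintm
        have hcongr : ∫ s in (0:ℝ)..t, V (z s) = ∫ s in (0:ℝ)..t, V (xs m s) := by
          apply intervalIntegral.integral_congr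
          intro s hs
          rw [uIcc_of_le ht.1] at hs
          exact congrArg V (zeq m ⟨hs.1, le_trans hs.2 hm.le⟩)
        have hz0 : z t = xs m t := zeq m htm
        rw [hz0, hw]
        simp only [hcongr, hFTC, (hxs m).1]
        abel
      have hzw : ∀ t ∈ Icc (0:ℝ) τ, z t = w t := by
        intro t ht
        rcases lt_or_eq_of_le ht.2 with h | h
        · exact hzw' t ⟨ht.1, h⟩
        · have hne : (nhdsWithin τ (Ico 0 τ)).NeBot := by
            apply mem_closure_iff_nhdsWithin_neBot.mp
            rw [closure_Ico (by linarith : (0:ℝ) ≠ τ)]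
            exact right_mem_Icc.2 hτ0
          have h1 : Tendsto w (nhdsWithin τ (Ico 0 τ)) (𝓝 (w τ)) :=
            ((hwd τ (right_mem_Icc.2 hτ0)).continuousWithinAt).mono_left
              (nhdsWithin_mono _ Ico_subset_Icc_self)
          have h2 : Tendsto z (nhdsWithin τ (Ico 0 τ)) (𝓝 (z τ)) :=
            (zcont τ (right_mem_Icc.2 hτ0)).mono_left
              (nhdsWithin_mono _ Ico_subset_Icc_self)
          have h3 : z =ᶠ[nhdsWithin τ (Ico 0 τ)] w :=
            eventually_nhdsWithin_of_forall hzw'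
          have h4 : Tendsto z (nhdsWithin τ (Ico 0 τ)) (𝓝 (w τ)) := h1.congr' h3.symm
          rw [h]
          exact tendsto_nhds_unique h2 h4
      refine ⟨hτ0, hτT, w, ?_, fun t ht => ?_⟩
      · rw [hw]; simp
      · rw [← hzw t ht]
        exact hwd t ht

  -- Step 2 : τ = T
  rcases eq_or_lt_of_le hτT with hEq | hlt
  · obtain ⟨_, _, x, hx0, hx⟩ := hτA
    rw [hEq] at hx
    exact ⟨x, hx0, hx⟩
  · exfalso
    obtain ⟨_, _, x, hx0, hxd⟩ := hτA
    obtain ⟨δ₀, hδ₀, w, hw0, hwd⟩ := local_ext hV hC hb (x τ) τ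
    set δ : ℝ := min δ₀ (T - τ) with hδdef
    have hδ : 0 < δ := lt_min hδ₀ (by linarith)
    have hsubw : Icc τ (τ + δ) ⊆ Icc τ (τ + δ₀) :=
      Icc_subset_Icc_right (by linarith [min_le_left δ₀ (T - τ)])
    have hwd' : ∀ t ∈ Icc τ (τ + δ), HasDerivWithinAt w (V (w t)) (Icc τ (τ + δ)) t :=
      fun t ht => (hwd t (hsubw ht)).mono hsubw
    set Z : ℝ → E := fun t => if t ≤ τ then x t else w t with hZ
    have hZx : EqOn Z x (Icc 0 τ) := fun t ht => if_pos ht.2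
    have hZw : EqOn Z w (Icc τ (τ + δ)) := by
      intro t ht
      rcases eq_or_lt_of_le ht.1 with h | h
      · rw [← h, show Z τ = x τ from if_pos le_rfl, hw0]
      · exact if_neg (not_le.2 h)
    have hZd : ∀ t ∈ Icc (0:ℝ) (τ + δ), HasDerivWithinAt Z (V (Z t)) (Icc 0 (τ + δ)) t := by
      intro t ht
      rcases lt_trichotomy t τ with h | h | h
      · have hmem1 : Icc 0 (τ + δ) ∩ Iio τ ∈ nhdsWithin t (Icc 0 (τ + δ)) :=
          inter_mem_nhdsWithin _ (Iio_mem_nhds h)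
        have hmem2 : Icc (0:ℝ) τ ∈ nhdsWithin t (Icc 0 (τ + δ)) :=
          Filter.mem_of_superset hmem1 (fun y hy => ⟨hy.1.1, hy.2.le⟩)
        have h1 : HasDerivWithinAt x (V (x t)) (Icc 0 (τ + δ)) t :=
          (hxd t ⟨ht.1, h.le⟩).mono_of_mem_nhdsWithin hmem2
        have hzt : Z t = x t := if_pos h.le
        rw [show V (Z t) = V (x t) from congrArg V hzt]
        exact h1.congr_of_eventuallyEq
          (Filter.eventuallyEq_of_mem hmem1 (fun y hy => if_pos hy.2.le)) hzt
      · rw [h]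
        have hL : HasDerivWithinAt Z (V (x τ)) (Icc 0 τ) τ :=
          (hxd τ (right_mem_Icc.2 hτ0)).congr hZx (hZx (right_mem_Icc.2 hτ0))
        have hR : HasDerivWithinAt Z (V (x τ)) (Icc τ (τ + δ)) τ := by
          have h5 := hwd' τ (left_mem_Icc.2 (by linarith))
          rw [hw0] at h5
          exact h5.congr hZw (hZw (left_mem_Icc.2 (by linarith)))
        have hU := hL.union hR
        rw [Icc_union_Icc_eq_Icc hτ0 (by linarith)] at hU
        rw [show V (Z τ) = V (x τ) from congrArg V (show Z τ = x τ from if_pos le_rfl)]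
        exact hU
      · have hmem1 : Icc 0 (τ + δ) ∩ Ioi τ ∈ nhdsWithin t (Icc 0 (τ + δ)) :=
          inter_mem_nhdsWithin _ (Ioi_mem_nhds h)
        have hmem2 : Icc τ (τ + δ) ∈ nhdsWithin t (Icc 0 (τ + δ)) :=
          Filter.mem_of_superset hmem1 (fun y hy => ⟨hy.2.le, hy.1.2⟩)
        have h1 : HasDerivWithinAt w (V (w t)) (Icc 0 (τ + δ)) t :=
          (hwd' t ⟨h.le, ht.2⟩).mono_of_mem_nhdsWithin hmem2
        have hzt : Z t = w t := if_neg (not_le.2 h)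
        rw [show V (Z t) = V (w t) from congrArg V hzt]
        exact h1.congr_of_eventuallyEq
          (Filter.eventuallyEq_of_mem hmem1 (fun y hy => if_neg (not_le.2 hy.2))) hzt
    have hmemA : τ + δ ∈ A := by
      refine ⟨by linarith, by linarith [min_le_right δ₀ (T - τ)], Z, ?_, hZd⟩
      show Z 0 = u₀
      rw [show Z 0 = x 0 from if_pos hτ0, hx0]
    have := le_csSup hbdd hmemA
    linarith


end
theorem ode_cont {E : Type*} [NormedAddCommGroup E] [NormedSpace ℝ E]
    {V : E → E} {C : ℝ} (hV : LocallyLipschitz V) (hC : 0 < C) (hb : ∀ x, ‖V x‖ ≤ C)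
    {T : ℝ} (hT : 0 ≤ T) (sol : E → ℝ → E)
    (hsol0 : ∀ u, sol u 0 = u)
    (hsold : ∀ u, ∀ t ∈ Icc (0:ℝ) T, HasDerivWithinAt (sol u) (V (sol u t)) (Icc 0 T) t) :
    Continuous (fun u => sol u T) := by
  rw [continuous_iff_continuousAt]
  intro u₀
  have hcont : ∀ u, ContinuousOn (sol u) (Icc 0 T) :=
    fun u t ht => (hsold u t ht).continuousWithinAt
  set K : Set E := sol u₀ '' Icc 0 T with hK
  have hKc : IsCompact K := isCompact_Icc.image_of_continuousOn (hcont u₀)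
  have hKne : K.Nonempty := ⟨sol u₀ 0, 0, ⟨le_rfl, hT⟩, rfl⟩
  obtain ⟨r, hr, L, hlip⟩ := tube_lipschitz hV hC hb hKc hKne
  set M : ℝ := Real.exp (L * T) with hM
  have hM1 : 1 ≤ M := Real.one_le_exp (by positivity)
  have hM0 : 0 < M := lt_of_lt_of_le zero_lt_one hM1
  have key : ∀ u, dist u u₀ < r / 2 / M → ∀ t ∈ Icc (0:ℝ) T,
      dist (sol u t) (sol u₀ t) ≤ dist u u₀ * Real.exp (L * t) := by
    intro u hu
    have hu2 : dist u u₀ ≤ r / 2 := by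
      have : r / 2 / M ≤ r / 2 := div_le_self (by positivity) hM1
      linarith
    set d : ℝ → ℝ := fun s => dist (sol u s) (sol u₀ s) with hd
    have hdcont : ContinuousOn d (Icc 0 T) :=
      continuous_dist.comp_continuousOn ((hcont u).prodMk (hcont u₀))
    set B : Set ℝ := {b | b ∈ Icc (0:ℝ) T ∧ ∀ s ∈ Icc (0:ℝ) b, d s ≤ r / 2} with hB
    have h0B : (0:ℝ) ∈ B := by
      refine ⟨⟨le_rfl, hT⟩, fun s hs => ?_⟩
      have hs0 : s = 0 := le_antisymm hs.2 hs.1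
      rw [hs0]
      simpa [hd, hsol0] using hu2
    have hBbdd : BddAbove B := ⟨T, fun b hb => hb.1.2⟩
    set β : ℝ := sSup B with hβ
    have hβ0 : 0 ≤ β := le_csSup hBbdd h0B
    have hβT : β ≤ T := csSup_le ⟨0, h0B⟩ fun b hb => hb.1.2
    have hIco : ∀ s ∈ Ico (0:ℝ) β, d s ≤ r / 2 := by
      intro s hs
      obtain ⟨b, hbB, hsb⟩ := exists_lt_of_lt_csSup ⟨0, h0B⟩ hs.2
      exact hbB.2 s ⟨hs.1, hsb.le⟩
    have hβB : ∀ s ∈ Icc (0:ℝ) β, d s ≤ r / 2 := by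
      intro s hs
      rcases lt_or_eq_of_le hs.2 with h | h
      · exact hIco s ⟨hs.1, h⟩
      · rcases eq_or_lt_of_le hβ0 with h0 | h0
        · rw [h, ← h0]
          simpa [hd, hsol0] using hu2
        · have hne : (nhdsWithin β (Ico 0 β)).NeBot := by
            apply mem_closure_iff_nhdsWithin_neBot.mp
            rw [closure_Ico (ne_of_lt h0)]
            exact right_mem_Icc.2 hβ0
          have h1 : Tendsto d (nhdsWithin β (Ico 0 β)) (𝓝 (d β)) :=
            ((hdcont β ⟨hβ0, hβT⟩).mono_left
              (nhdsWithin_mono _ (fun y hy => ⟨hy.1, le_trans hy.2.le hβT⟩)))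
          have h2 : ∀ᶠ s in nhdsWithin β (Ico 0 β), d s ≤ r / 2 :=
            eventually_nhdsWithin_of_forall hIco
          rw [h]
          exact le_of_tendsto h1 h2
    -- Grönwall estimate on [0, β]
    have hgr : ∀ t ∈ Icc (0:ℝ) β, d t ≤ dist u u₀ * Real.exp (L * (t - 0)) := by
      apply dist_le_of_trajectories_ODE_of_mem
        (v := fun _ => V) (s := fun _ => Metric.thickening r K) (fun _ _ => hlip)
        ((hcont u).mono (Icc_subset_Icc_right hβT))
        (fun t ht => hasDerivWithinAt_Ici_of_Icc ⟨ht.1, lt_of_lt_of_le ht.2 hβT⟩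
          (hsold u t ⟨ht.1, le_trans ht.2.le hβT⟩))
        (fun t ht => Metric.mem_thickening_iff.mpr
          ⟨sol u₀ t, ⟨t, ⟨ht.1, le_trans ht.2.le hβT⟩, rfl⟩,
            lt_of_le_of_lt (hIco t ht) (by linarith)⟩)
        ((hcont u₀).mono (Icc_subset_Icc_right hβT))
        (fun t ht => hasDerivWithinAt_Ici_of_Icc ⟨ht.1, lt_of_lt_of_le ht.2 hβT⟩
          (hsold u₀ t ⟨ht.1, le_trans ht.2.le hβT⟩))
        (fun t ht => Metric.self_subset_thickening hr K
          ⟨t, ⟨ht.1, le_trans ht.2.le hβT⟩, rfl⟩)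
        (by rw [hsol0, hsol0])
    -- β = T
    have hβeq : β = T := by
      by_contra hne
      have hβT' : β < T := lt_of_le_of_ne hβT hne
      have hdβ : d β < r / 2 := by
        have h1 : d β ≤ dist u u₀ * Real.exp (L * β) := by
          simpa using hgr β (right_mem_Icc.2 hβ0)
        have h2 : Real.exp (L * β) ≤ M := by
          rw [hM]
          apply Real.exp_le_exp.2
          have : (0:ℝ) ≤ (L:ℝ) := L.2
          nlinarith
        have h3 : dist u u₀ * Real.exp (L * β) ≤ dist u u₀ * M :=
          mul_le_mul_of_nonneg_left h2 dist_nonneg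
        have h4 : dist u u₀ * M < (r / 2 / M) * M :=
          mul_lt_mul_of_pos_right hu hM0
        have h5 : (r / 2 / M) * M = r / 2 := div_mul_cancel₀ _ (ne_of_gt hM0)
        linarith
      have hev : ∀ᶠ s in nhdsWithin β (Icc 0 T), d s < r / 2 :=
        Filter.Tendsto.eventually (hdcont β ⟨hβ0, hβT⟩) (gt_mem_nhds hdβ)
      obtain ⟨ρ, hρ, hball⟩ := Metric.mem_nhdsWithin_iff.mp hev
      set b' : ℝ := min (β + ρ / 2) T with hb'
      have hβb' : β < b' := lt_min (by linarith) hβT'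
      have hb'B : b' ∈ B := by
        refine ⟨⟨by linarith [le_trans hβ0 hβb'.le], min_le_right _ _⟩, fun s hs => ?_⟩
        rcases le_or_gt s β with h | h
        · exact hβB s ⟨hs.1, h⟩
        · have hsT : s ∈ Icc (0:ℝ) T := ⟨hs.1, le_trans hs.2 (min_le_right _ _)⟩
          have hsd : dist s β < ρ := by
            rw [Real.dist_eq, abs_of_pos (by linarith)]
            have : s ≤ β + ρ / 2 := le_trans hs.2 (min_le_left _ _)
            linarith
          exact (hball ⟨mem_ball.mpr hsd, hsT⟩).le
      have := le_csSup hBbdd hb'B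
      linarith
    intro t ht
    rw [hβeq] at hgr
    simpa using hgr t ht
  -- conclude continuity at u₀
  rw [Metric.continuousAt_iff]
  intro ε' hε'
  refine ⟨min (r / 2 / M) (ε' / (M + 1)), lt_min (by positivity) (by positivity), fun u hu => ?_⟩
  have h1 : dist u u₀ < r / 2 / M := lt_of_lt_of_le hu (min_le_left _ _)
  have h2 : dist u u₀ < ε' / (M + 1) := lt_of_lt_of_le hu (min_le_right _ _)
  have h3 : dist (sol u T) (sol u₀ T) ≤ dist u u₀ * M := by
    rw [hM]
    exact key u h1 T (right_mem_Icc.2 hT)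
  have h4 : dist u u₀ * M < (ε' / (M + 1)) * M :=
    mul_lt_mul_of_pos_right h2 hM0
  have h5 : (ε' / (M + 1)) * M < ε' := by
    rw [div_mul_eq_mul_div, div_lt_iff₀ (by linarith)]
    nlinarith
  linarith
theorem willem_quantitative_deformation_lemma
    {X : Type*} [NormedAddCommGroup X] [InnerProductSpace ℝ X] [CompleteSpace X]
    (φ : X → ℝ) (hφ : ContDiff ℝ 2 φ) (c ε : ℝ) (hε : 0 < ε)
    (hgrad : ∀ u, φ u ∈ Set.Icc (c - 2*ε) (c + 2*ε) → 2*ε ≤ ‖fderiv ℝ φ u‖) :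
    ∃ η : X → X, Continuous η ∧
      (∀ u, φ u ∉ Set.Icc (c - 2*ε) (c + 2*ε) → η u = u) ∧
      (∀ u, φ u ≤ c + ε → φ (η u) ≤ c - ε) := by
  have hgrad' : ∀ u, |φ u - c| ≤ 2*ε → 2*ε ≤ ‖fderiv ℝ φ u‖ := by
    intro u hu
    rw [abs_le] at hu
    exact hgrad u ⟨by linarith [hu.1], by linarith [hu.2]⟩
  -- the gradient
  set G : X → X := fun u => (InnerProductSpace.toDual ℝ X).symm (fderiv ℝ φ u) with hG
  have hGC1 : ContDiff ℝ 1 G := by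
    have hf' : ContDiff ℝ 1 (fderiv ℝ φ) := hφ.fderiv_right (by norm_num)
    exact ((InnerProductSpace.toDual ℝ X).symm.contDiff.of_le le_top).comp hf'
  have hGinner : ∀ u v, ⟪G u, v⟫ = fderiv ℝ φ u v := fun u v =>
    InnerProductSpace.toDual_symm_apply
  have hGnorm : ∀ u, ‖G u‖ = ‖fderiv ℝ φ u‖ := fun u =>
    LinearIsometryEquiv.norm_map _ _
  -- the cutoff function
  set b : ContDiffBump (c : ℝ) := ⟨ε, 2*ε, hε, by linarith⟩ with hbdef
  have hχ1 : ∀ s, |s - c| ≤ ε → b s = 1 := fun s hs =>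
    b.one_of_mem_closedBall (by rwa [mem_closedBall, Real.dist_eq])
  have hχ0 : ∀ s, 2*ε ≤ |s - c| → b s = 0 := fun s hs =>
    b.zero_of_le_dist (by rwa [Real.dist_eq])
  have hχsupp : ∀ s, b s ≠ 0 → |s - c| < 2*ε := by
    intro s hs
    by_contra h
    exact hs (hχ0 s (not_lt.1 h))
  have hχC : ContDiff ℝ 1 ⇑b := b.contDiff
  -- the complementary glue
  set θ : ℝ → ℝ := fun s => expNegInvGlue ((s - c)^2 - (2*ε)^2) with hθ
  have hθC : ContDiff ℝ 1 θ :=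
    expNegInvGlue.contDiff.comp (((contDiff_id.sub contDiff_const).pow 2).sub contDiff_const)
  have hθ0 : ∀ s, |s - c| ≤ 2*ε → θ s = 0 := by
    intro s hs
    apply expNegInvGlue.zero_of_nonpos
    have h1 : (s - c)^2 ≤ (2*ε)^2 := sq_le_sq' (by linarith [(abs_le.1 hs).1]) (abs_le.1 hs).2
    linarith
  have hθpos : ∀ s, 2*ε < |s - c| → 0 < θ s := by
    intro s hs
    apply expNegInvGlue.pos_of_pos
    have h1 : (2*ε)^2 < |s - c|^2 := by nlinarith [abs_nonneg (s - c)]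
    rw [sq_abs] at h1
    linarith
  have hθnn : ∀ s, 0 ≤ θ s := fun s => expNegInvGlue.nonneg _
  -- the denominator
  set D : X → ℝ := fun u => ⟪G u, G u⟫ + θ (φ u) with hD
  have hDC : ContDiff ℝ 1 D :=
    (ContDiff.inner ℝ hGC1 hGC1).add (hθC.comp (hφ.of_le (by norm_num)))
  have hDpos : ∀ u, 0 < D u := by
    intro u
    rcases le_or_gt (|φ u - c|) (2*ε) with h | h
    · have h1 : 2*ε ≤ ‖G u‖ := by rw [hGnorm]; exact hgrad' u h
      have h2 : ⟪G u, G u⟫ = ‖G u‖^2 := real_inner_self_eq_norm_sq (G u)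
      have h3 := hθnn (φ u)
      simp only [hD]
      nlinarith
    · have h1 := hθpos (φ u) h
      have h2 : (0:ℝ) ≤ ⟪G u, G u⟫ := real_inner_self_nonneg
      simp only [hD]
      linarith
  have hDeq : ∀ u, b (φ u) ≠ 0 → D u = ‖G u‖^2 := by
    intro u hu
    have h1 := hθ0 (φ u) (hχsupp _ hu).le
    simp only [hD, h1, add_zero]
    exact real_inner_self_eq_norm_sq (G u)
  -- the vector field
  set V : X → X := fun u => (-(b (φ u) / D u)) • G u with hV
  have hVC1 : ContDiff ℝ 1 V :=
    (((hχC.comp (hφ.of_le (by norm_num))).div hDC fun u => (hDpos u).ne').neg).smul hGC1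
  have hVlip : LocallyLipschitz V := hVC1.locallyLipschitz
  have hCpos : (0:ℝ) < (2*ε)⁻¹ := by positivity
  have hVb : ∀ u, ‖V u‖ ≤ (2*ε)⁻¹ := by
    intro u
    by_cases hb0 : b (φ u) = 0
    · rw [hV]; simp only [hb0, zero_div, neg_zero, zero_smul, norm_zero]; positivity
    · have hGb : 2*ε ≤ ‖G u‖ := by rw [hGnorm]; exact hgrad' u (hχsupp _ hb0).le
      have hGne : ‖G u‖ ≠ 0 := (lt_of_lt_of_le (by linarith : (0:ℝ) < 2*ε) hGb).ne'
      have hDu := hDeq u hb0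
      have hble : b (φ u) ≤ 1 := b.le_one
      have hbnn : 0 ≤ b (φ u) := b.nonneg
      rw [hV]
      simp only
      rw [norm_smul, Real.norm_eq_abs, abs_neg, abs_div, abs_of_nonneg hbnn,
        abs_of_pos (hDpos u), hDu]
      rw [div_mul_eq_mul_div, sq, ← div_div, mul_div_assoc, div_self hGne, mul_one]
      rw [inv_eq_one_div]
      exact div_le_div₀ (by norm_num) hble (by linarith) hGb
  have hVinner : ∀ u, fderiv ℝ φ u (V u) = -(b (φ u)) := by
    intro u
    rw [← hGinner]
    rw [hV]
    simp only
    rw [real_inner_smul_right]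
    by_cases hb0 : b (φ u) = 0
    · simp [hb0]
    · have h1 : D u = ⟪G u, G u⟫ := by
        simp only [hD, hθ0 (φ u) (hχsupp _ hb0).le, add_zero]
      rw [← h1]
      field_simp
      rw [div_self (hDpos u).ne']
  have hVzero : ∀ u, φ u ∉ Set.Icc (c - 2*ε) (c + 2*ε) → V u = 0 := by
    intro u hu
    have h1 : 2*ε ≤ |φ u - c| := by
      rw [Set.mem_Icc, not_and_or, not_le, not_le] at hu
      rcases hu with h | h
      · rw [abs_sub_comm, abs_of_pos (by linarith)]; linarith
      · rw [abs_of_pos (by linarith)]; linarith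
    rw [hV]; simp [hχ0 _ h1]
  -- solve the ODE
  have hT : (0:ℝ) ≤ 2*ε := by linarith
  choose sol hsol0 hsold using fun u => ode_exists hVlip hCpos hVb u (2*ε) hT
  refine ⟨fun u => sol u (2*ε), ode_cont hVlip hCpos hVb hT sol hsol0 hsold, ?_, ?_⟩
  · -- (a) identity off the band
    intro u hu
    have hconst : ∀ t ∈ Icc (0:ℝ) (2*ε),
        HasDerivWithinAt (fun _ : ℝ => u) (V ((fun _ : ℝ => u) t)) (Icc 0 (2*ε)) t := by
      intro t ht
      rw [hVzero u hu]
      exact hasDerivWithinAt_const t _ u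
    have := ode_unique hVlip hCpos hVb (hsold u) hconst (by rw [hsol0])
    exact this ⟨hT, le_rfl⟩
  · -- (b) pushing the sublevel set down
    intro u hu
    set y : ℝ → ℝ := fun t => φ (sol u t) with hy
    have hyd : ∀ t ∈ Icc (0:ℝ) (2*ε), HasDerivWithinAt y (-(b (y t))) (Icc 0 (2*ε)) t := by
      intro t ht
      have h1 : HasFDerivAt φ (fderiv ℝ φ (sol u t)) (sol u t) :=
        (hφ.differentiable (by norm_num) (sol u t)).hasFDerivAt
      have h2 := h1.comp_hasDerivWithinAt t (hsold u t ht)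
      rw [hVinner] at h2
      exact h2
    have hycont : ContinuousOn y (Icc 0 (2*ε)) := fun t ht => (hyd t ht).continuousWithinAt
    have hanti : AntitoneOn y (Icc 0 (2*ε)) := by
      apply antitoneOn_of_deriv_nonpos (convex_Icc _ _) hycont
      · intro t ht
        rw [interior_Icc] at ht
        exact ((hyd t (Ioo_subset_Icc_self ht)).hasDerivAt
          (Icc_mem_nhds ht.1 ht.2)).differentiableAt.differentiableWithinAt
      · intro t ht
        rw [interior_Icc] at ht
        rw [((hyd t (Ioo_subset_Icc_self ht)).hasDerivAt (Icc_mem_nhds ht.1 ht.2)).deriv]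
        simp [b.nonneg]
    have hy0 : y 0 = φ u := congrArg φ (hsol0 u)
    have hmem0 : (0:ℝ) ∈ Icc (0:ℝ) (2*ε) := ⟨le_rfl, hT⟩
    have hmem2 : (2*ε) ∈ Icc (0:ℝ) (2*ε) := ⟨hT, le_rfl⟩
    rcases le_or_gt (y 0) (c - ε) with h | h
    · have := hanti hmem0 hmem2 hT
      show y (2*ε) ≤ c - ε
      linarith
    · by_contra hcon
      push_neg at hcon
      have hcon' : c - ε < y (2*ε) := hcon
      have hband : ∀ t ∈ Icc (0:ℝ) (2*ε), b (y t) = 1 := by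
        intro t ht
        apply hχ1
        have h1 : y t ≤ y 0 := hanti hmem0 ht ht.1
        have h2 : y (2*ε) ≤ y t := hanti ht hmem2 ht.2
        have h3 : y 0 ≤ c + ε := by rw [hy0]; exact hu
        rw [abs_le]
        constructor <;> linarith
      have hg : ∀ t ∈ Ico (0:ℝ) (2*ε), HasDerivWithinAt (fun s => y s + s) 0 (Ici t) t := by
        intro t ht
        have h1 := hyd t (Ico_subset_Icc_self ht)
        rw [hband t (Ico_subset_Icc_self ht)] at h1
        have h2 := h1.add (hasDerivWithinAt_id t (Icc 0 (2*ε)))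
        norm_num at h2
        exact hasDerivWithinAt_Ici_of_Icc ht h2
      have hconstant := constant_of_has_deriv_right_zero
        (hycont.add continuous_id.continuousOn) hg (2*ε) hmem2
      have h3 : y 0 ≤ c + ε := by rw [hy0]; exact hu
      have : y (2*ε) + 2*ε = y 0 + 0 := hconstant
      linarith
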